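/- If R is uniquely π-clean, then the quotient R/J(R) is uniquely π-clean, where J(R) is the Jacobson radical. -/

import Mathlib

/-- An element `a` is uniquely clean if it can be uniquely written as the
sum of an idempotent and a unit. -/
def UniquelyCleanElem {R : Type*} [Ring R] (a : R) : Prop :=
  ∃! e : R, IsIdempotentElem e ∧ IsUnit (a - e)

/-- A ring is uniquely π-clean if some power of every element is uniquely clean. -/
def UniquelyPiClean (R : Type*) [Ring R] : Prop :=
  ∀ a : R, ∃ n : ℕ, 1 ≤ n ∧ UniquelyCleanElem (a ^ n)

/-- A ring is abelian if every idempotent is central. -/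
def AbelianRing (R : Type*) [Ring R] : Prop :=
  ∀ e : R, IsIdempotentElem e → ∀ x : R, e * x = x * e

/-- "R/J(R) is uniquely π-clean", expressed via congruence modulo the
Jacobson radical J: for every a there is n ≥ 1 and e which is an idempotent
modulo J such that a^n - e is a unit modulo J, and e is unique modulo J. -/
def UniquelyPiCleanModJ (R : Type*) [Ring R] : Prop :=
  ∀ a : R, ∃ n : ℕ, 1 ≤ n ∧ ∃ e : R,
    (e * e - e ∈ (⊥ : Ideal R).jacobson ∧
      ∃ u v : R, u * v - 1 ∈ (⊥ : Ideal R).jacobson ∧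
        v * u - 1 ∈ (⊥ : Ideal R).jacobson ∧ a ^ n - e - u ∈ (⊥ : Ideal R).jacobson) ∧
    ∀ f : R,
      (f * f - f ∈ (⊥ : Ideal R).jacobson ∧
        ∃ u v : R, u * v - 1 ∈ (⊥ : Ideal R).jacobson ∧
          v * u - 1 ∈ (⊥ : Ideal R).jacobson ∧ a ^ n - f - u ∈ (⊥ : Ideal R).jacobson) →
      e - f ∈ (⊥ : Ideal R).jacobson



section Aux

variable {R : Type*} [Ring R]

/-- The Jacobson radical is closed under right multiplication. -/
lemma jac_mul_right {x : R} (hx : x ∈ (⊥ : Ideal R).jacobson) (y : R) :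
    x * y ∈ (⊥ : Ideal R).jacobson :=
  Ideal.mul_mem_right y _ hx

lemma jac_left_inv {x : R} (hx : x ∈ (⊥ : Ideal R).jacobson) :
    ∃ z : R, z * (1 + x) = 1 ∧ z - 1 ∈ (⊥ : Ideal R).jacobson := by
  obtain ⟨z, hz⟩ := Ideal.mem_jacobson_iff.1 hx 1
  rw [Ideal.mem_bot] at hz
  refine ⟨z, ?_, ?_⟩
  · have h' : z * (1 + x) - 1 = z * 1 * x + z - 1 := by noncomm_ring
    rw [← sub_eq_zero, h', hz]
  · have h'' : z - 1 = -(z * 1 * x) + (z * 1 * x + z - 1) := by noncomm_ring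
    rw [h'', hz, add_zero]
    exact Submodule.neg_mem _ (Ideal.mul_mem_left _ _ hx)

lemma jac_isUnit_one_add {x : R} (hx : x ∈ (⊥ : Ideal R).jacobson) : IsUnit (1 + x) := by
  obtain ⟨z, hz1, hz2⟩ := jac_left_inv hx
  obtain ⟨z', hz1', _⟩ := jac_left_inv hz2
  rw [add_sub_cancel] at hz1'
  have hzx : (1 + x) * z = 1 := by
    have hthis : z' = 1 + x := by
      calc z' = z' * (z * (1 + x)) := by rw [hz1, mul_one]
        _ = (z' * z) * (1 + x) := by rw [mul_assoc]
        _ = 1 + x := by rw [hz1', one_mul]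
    rw [← hthis]; exact hz1'
  exact ⟨⟨1 + x, z, hzx, hz1⟩, rfl⟩

lemma jac_isUnit_of_mod {u v : R} (h1 : u * v - 1 ∈ (⊥ : Ideal R).jacobson)
    (h2 : v * u - 1 ∈ (⊥ : Ideal R).jacobson) : IsUnit u := by
  have huv : IsUnit (u * v) := by
    have := jac_isUnit_one_add h1
    rwa [add_sub_cancel] at this
  have hvu : IsUnit (v * u) := by
    have := jac_isUnit_one_add h2
    rwa [add_sub_cancel] at this
  obtain ⟨a, ha⟩ := huv
  obtain ⟨b, hb⟩ := hvu
  have hr : u * (v * ↑a⁻¹) = 1 := by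
    rw [← mul_assoc, ← ha, Units.mul_inv]
  have hl : (↑b⁻¹ * v) * u = 1 := by
    rw [mul_assoc, ← hb, Units.inv_mul]
  have heq : v * ↑a⁻¹ = ↑b⁻¹ * v := by
    calc v * ↑a⁻¹ = ((↑b⁻¹ * v) * u) * (v * ↑a⁻¹) := by rw [hl, one_mul]
      _ = (↑b⁻¹ * v) * (u * (v * ↑a⁻¹)) := by noncomm_ring
      _ = ↑b⁻¹ * v := by rw [hr, mul_one]
  exact ⟨⟨u, v * ↑a⁻¹, hr, by rw [heq]; exact hl⟩, rfl⟩


lemma upc_abelian {R : Type*} [Ring R] (h : UniquelyPiClean R) : AbelianRing R := by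
  have key : ∀ e : R, IsIdempotentElem e → ∀ x : R, e * x - e * x * e = 0 := by
    intro e he x
    set q : R := e * x - e * x * e with hq
    have hqe : q * e = 0 := by
      rw [hq, sub_mul, mul_assoc (e * x) e e, he.eq, sub_self]
    have he2 : e * (e * x) = e * x := by rw [← mul_assoc, he.eq]
    have heq : e * q = q := by
      rw [hq, mul_sub, ← mul_assoc e (e * x) e, he2]
    have hq2 : q * q = 0 := by
      have h0 : q * q = (q * e) * (x - x * e) := by rw [hq]; noncomm_ring
      rw [h0, hqe, zero_mul]
    have hf : IsIdempotentElem (e + q) := by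
      show (e + q) * (e + q) = e + q
      rw [add_mul, mul_add, mul_add, he.eq, heq, hqe, hq2, add_zero, add_zero]
    obtain ⟨n, hn, g, hg, hgu⟩ := h e
    have hen : e ^ n = e := by
      obtain ⟨m, rfl⟩ := Nat.exists_eq_add_of_le hn
      rw [add_comm]; exact he.pow_succ_eq m
    rw [hen] at hg hgu
    have hsq : (2 * e - 1) * (2 * e - 1) = 1 := by
      have h0 : (2 * e - 1) * (2 * e - 1) = 4 * (e * e) - 4 * e + 1 := by noncomm_ring
      rw [h0, he.eq]; noncomm_ring
    have hc1 : IsIdempotentElem (1 - e) ∧ IsUnit (e - (1 - e)) := by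
      refine ⟨he.one_sub, ?_⟩
      have h2 : e - (1 - e) = 2 * e - 1 := by noncomm_ring
      rw [h2]
      exact ⟨⟨2 * e - 1, 2 * e - 1, hsq, hsq⟩, rfl⟩
    have hc2 : IsIdempotentElem (1 - (e + q)) ∧ IsUnit (e - (1 - (e + q))) := by
      refine ⟨hf.one_sub, ?_⟩
      have h2 : e - (1 - (e + q)) = (2 * e - 1) * (1 + q) := by
        have h3 : (2 * e - 1) * (1 + q) = 2 * e - 1 + 2 * (e * q) - q := by noncomm_ring
        rw [h3, heq]; noncomm_ring
      rw [h2]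
      refine IsUnit.mul ⟨⟨2 * e - 1, 2 * e - 1, hsq, hsq⟩, rfl⟩ ?_
      refine ⟨⟨1 + q, 1 - q, ?_, ?_⟩, rfl⟩
      · have h3 : (1 + q) * (1 - q) = 1 + q - q - q * q := by noncomm_ring
        rw [h3, hq2]; noncomm_ring
      · have h3 : (1 - q) * (1 + q) = 1 + q - q - q * q := by noncomm_ring
        rw [h3, hq2]; noncomm_ring
    have h12 : (1 : R) - e = 1 - (e + q) := by
      rw [hgu (1 - e) hc1, hgu (1 - (e + q)) hc2]
    have h13 : e = e + q := sub_right_inj.mp h12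
    have h14 : q = 0 := (left_eq_add.mp h13)
    rw [hq] at h14
    exact h14
  intro e he x
  have h1 := key e he x
  have h2 := key (1 - e) he.one_sub x
  rw [sub_eq_zero] at h1 h2
  have h4 : x * e - e * x * e = (1 - e) * x - (1 - e) * x * (1 - e) := by noncomm_ring
  rw [← h2, sub_self] at h4
  have h2' : x * e = e * x * e := sub_eq_zero.mp h4
  rw [h1, h2']

/-- The congruence modulo the Jacobson radical, as a `RingCon`. -/
def jacCon (R : Type*) [Ring R] : RingCon R where
  r a b := a - b ∈ (⊥ : Ideal R).jacobson
  iseqv := by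
    constructor
    · intro a; simp
    · intro a b hab
      have h := Submodule.neg_mem _ hab
      rwa [neg_sub] at h
    · intro a b c hab hbc
      have h := Submodule.add_mem _ hab hbc
      rwa [sub_add_sub_cancel] at h
  mul' := by
    intro a b c d h1 h2
    have key : a * c - b * d = a * (c - d) + (a - b) * d := by noncomm_ring
    show a * c - b * d ∈ (⊥ : Ideal R).jacobson
    rw [key]
    exact Submodule.add_mem _ (Ideal.mul_mem_left _ _ h2) (jac_mul_right h1 d)
  add' := by
    intro a b c d h1 h2
    have key : a + c - (b + d) = (a - b) + (c - d) := by noncomm_ring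
    show a + c - (b + d) ∈ (⊥ : Ideal R).jacobson
    rw [key]
    exact Submodule.add_mem _ h1 h2

lemma jacCon_eq {a b : R} :
    (jacCon R).mk' a = (jacCon R).mk' b ↔ a - b ∈ (⊥ : Ideal R).jacobson :=
  RingCon.eq _

/-- For commuting idempotents, `(p - q)^3 = p - q`. -/
lemma cube_sub_idem {S : Type*} [Ring S] {p q : S} (hp : p * p = p) (hq : q * q = q)
    (hc : q * p = p * q) : (p - q) * ((p - q) * (p - q)) = p - q := by
  have h1 : (p - q) * (p - q) = p - p * q - p * q + q := by
    have h0 : (p - q) * (p - q) = p * p - p * q - q * p + q * q := by noncomm_ring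
    rw [h0, hp, hq, hc]
  rw [h1]
  have h2 : (p - q) * (p - p * q - p * q + q) =
      p * p - p * (p * q) - p * (p * q) + p * q - q * p + q * (p * q) + q * (p * q) - q * q := by
    noncomm_ring
  have e1 : p * (p * q) = p * q := by rw [← mul_assoc, hp]
  have e2 : q * (p * q) = p * q := by rw [← mul_assoc, hc, mul_assoc, hq]
  rw [h2, hp, hq, e1, e2, hc]
  noncomm_ring

/-- Idempotent lifting modulo the Jacobson radical in a uniquely π-clean ring. -/
lemma upc_lift (h : UniquelyPiClean R) {f : R} (hf : f * f - f ∈ (⊥ : Ideal R).jacobson) :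
    ∃ g : R, IsIdempotentElem g ∧ g - f ∈ (⊥ : Ideal R).jacobson := by
  have hab := upc_abelian h
  obtain ⟨n, hn, g, ⟨hg, hw⟩, -⟩ := h f
  have hpow0 : ∀ m : ℕ, f ^ (m + 1) - f ∈ (⊥ : Ideal R).jacobson := by
    intro m
    induction m with
    | zero => rw [pow_one, sub_self]; exact Submodule.zero_mem _
    | succ k ih =>
      have key : f ^ (k + 1 + 1) - f = f * (f ^ (k + 1) - f) + (f * f - f) := by
        rw [pow_succ' f (k + 1), mul_sub]
        abel
      rw [key]
      exact Submodule.add_mem _ (Ideal.mul_mem_left _ _ ih) hf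
  have hpow : f ^ n - f ∈ (⊥ : Ideal R).jacobson := by
    obtain ⟨m, rfl⟩ := Nat.exists_eq_add_of_le hn
    rw [add_comm]
    exact hpow0 m
  set c := jacCon R
  set F : c.Quotient := c.mk' f with hFdef
  set G : c.Quotient := c.mk' g with hGdef
  have hF : F * F = F := by
    rw [hFdef, ← map_mul]
    exact jacCon_eq.mpr hf
  have hG : G * G = G := by
    rw [hGdef, ← map_mul, hg.eq]
  have hcomm : G * F = F * G := by
    rw [hFdef, hGdef, ← map_mul, ← map_mul, hab g hg f]
  have hW : c.mk' (f ^ n - g) = F - G := by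
    rw [map_sub, jacCon_eq.mpr hpow]
  have hWu : IsUnit (F - G) := by
    rw [← hW]
    exact hw.map c.mk'
  have hcube : (F - G) * ((F - G) * (F - G)) = F - G := cube_sub_idem hF hG hcomm
  obtain ⟨a, ha⟩ := hWu
  have hsq : (F - G) * (F - G) = 1 := by
    calc (F - G) * (F - G) = (↑a⁻¹ * ↑a) * ((F - G) * (F - G)) := by
          rw [Units.inv_mul, one_mul]
      _ = ↑a⁻¹ * ((F - G) * ((F - G) * (F - G))) := by rw [ha, mul_assoc]
      _ = ↑a⁻¹ * (F - G) := by rw [hcube]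
      _ = ↑a⁻¹ * ↑a := by rw [ha]
      _ = 1 := Units.inv_mul a
  have hexp : F + G - (F * G + F * G) = 1 := by
    have h0 : (F - G) * (F - G) = F * F - F * G - G * F + G * G := by noncomm_ring
    rw [h0, hF, hG, hcomm] at hsq
    rw [← hsq]; noncomm_ring
  have hFG : F * G = 0 := by
    have h0 : F * G * (F + G - (F * G + F * G)) = F * G := by rw [hexp, mul_one]
    have e1 : F * G * F = F * G := by
      rw [mul_assoc, hcomm, ← mul_assoc, hF]
    have e2 : F * G * G = F * G := by rw [mul_assoc, hG]
    have e3 : F * G * (F * G) = F * G := by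
      rw [← mul_assoc, e1, mul_assoc, hG]
    have expand : F * G * (F + G - (F * G + F * G)) =
        F * G * F + F * G * G - (F * G * (F * G) + F * G * (F * G)) := by noncomm_ring
    rw [expand, e1, e2, e3] at h0
    have hz : F * G + F * G - (F * G + F * G) = 0 := by abel
    rw [hz] at h0
    exact h0.symm
  have hfin : c.mk' (1 - g) = c.mk' f := by
    rw [map_sub, map_one, ← hGdef, ← hFdef]
    rw [hFG] at hexp
    have h1 : F + G = 1 := by
      calc F + G = F + G - (0 + 0) := by abel
        _ = 1 := hexp
    rw [← h1]; abel
  exact ⟨1 - g, hg.one_sub, jacCon_eq.mp hfin⟩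

end Aux

theorem stmt3 {R : Type*} [Ring R] (h : UniquelyPiClean R) : UniquelyPiCleanModJ R := by
  intro a
  obtain ⟨n, hn, e, ⟨he, hu⟩, huniq⟩ := h a
  refine ⟨n, hn, e, ⟨?_, ?_⟩, ?_⟩
  · rw [he.eq, sub_self]; exact Submodule.zero_mem _
  · obtain ⟨U, hU⟩ := hu
    refine ⟨a ^ n - e, ↑U⁻¹, ?_, ?_, ?_⟩
    · rw [← hU, U.mul_inv, sub_self]; exact Submodule.zero_mem _
    · rw [← hU, U.inv_mul, sub_self]; exact Submodule.zero_mem _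
    · rw [sub_self]; exact Submodule.zero_mem _
  · rintro f ⟨hf, u, v, huv, hvu, hau⟩
    obtain ⟨g, hg, hgf⟩ := upc_lift h hf
    have hgu : a ^ n - g - u ∈ (⊥ : Ideal R).jacobson := by
      have key : a ^ n - g - u = (a ^ n - f - u) - (g - f) := by abel
      rw [key]
      exact Submodule.sub_mem _ hau hgf
    have h1 : (a ^ n - g) * v - 1 ∈ (⊥ : Ideal R).jacobson := by
      have key : (a ^ n - g) * v - 1 = (u * v - 1) + (a ^ n - g - u) * v := by noncomm_ring
      rw [key]
      exact Submodule.add_mem _ huv (jac_mul_right hgu v)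
    have h2 : v * (a ^ n - g) - 1 ∈ (⊥ : Ideal R).jacobson := by
      have key : v * (a ^ n - g) - 1 = (v * u - 1) + v * (a ^ n - g - u) := by noncomm_ring
      rw [key]
      exact Submodule.add_mem _ hvu (Ideal.mul_mem_left _ _ hgu)
    have hunit : IsUnit (a ^ n - g) := jac_isUnit_of_mod h1 h2
    have hge : g = e := huniq g ⟨hg, hunit⟩
    have key : e - f = g - f := by rw [hge]
    rw [key]
    exact hgf
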